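/- Let $f: G \to X'$ be a ring $Q$-mapping at $x_0 \in G$ between metric measure spaces of Hausdorff dimensions $\alpha, \alpha' \ge 2$, let $\varepsilon_0 > 0$ with $\overline{B(x_0,\varepsilon_0)} \subset G$, and suppose for each $\varepsilon \in (0, \varepsilon_0')$ there is a nonnegative measurable function $\psi_\varepsilon: (\varepsilon, \varepsilon_0) \to [0,\infty]$ with $0 < I(\varepsilon,\varepsilon_0) := \int_\varepsilon^{\varepsilon_0} \psi_\varepsilon(t)\,dt < \infty$ and $\int_{\varepsilon < d(x,x_0) < \varepsilon_0} Q(x)\, \psi_\varepsilon^\alpha(d(x,x_0))\, d\mu(x) \le F(\varepsilon,\varepsilon_0)$. Then for every $\varepsilon \in (0, \varepsilon_0')$, $M_{\alpha'}(f(\Gamma(S(x_0,\varepsilon), S(x_0,\varepsilon_0), A))) \le F(\varepsilon,\varepsilon_0)/I^\alpha(\varepsilon,\varepsilon_0)$, where $A = \{x : \varepsilon < d(x,x_0) < \varepsilon_0\}$. -/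
import Mathlib


open MeasureTheory Metric Set ENNReal Filter Topology

/-- A (parametrized) curve in `X`: a map defined on the interval `[a, b]`. -/
structure Curve (X : Type*) where
  a : ℝ
  b : ℝ
  toFun : ℝ → X

namespace Curve

/-- The integral of a Borel density `ρ` along the curve `γ` (with respect to the
arc-length/parameter measure). -/
noncomputable def pathIntegral {X : Type*} [MeasurableSpace X]
    (ρ : X → ℝ≥0∞) (γ : Curve X) : ℝ≥0∞ :=
  ∫⁻ t in Set.Icc γ.a γ.b, ρ (γ.toFun t)

/-- `γ₂` is a restriction (subcurve) of `γ₁`. -/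
def IsSubcurve {X : Type*} (γ₂ γ₁ : Curve X) : Prop :=
  γ₁.a ≤ γ₂.a ∧ γ₂.b ≤ γ₁.b ∧ ∀ t ∈ Set.Icc γ₂.a γ₂.b, γ₂.toFun t = γ₁.toFun t

/-- `ρ` is admissible for the curve family `Γ`. -/
def IsAdmissible {X : Type*} [MeasurableSpace X]
    (Γ : Set (Curve X)) (ρ : X → ℝ≥0∞) : Prop :=
  Measurable ρ ∧ ∀ γ ∈ Γ, 1 ≤ pathIntegral ρ γ

/-- The `α`-modulus of a curve family. -/
noncomputable def modulus {X : Type*} [MeasurableSpace X]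
    (μ : Measure X) (α : ℝ) (Γ : Set (Curve X)) : ℝ≥0∞ :=
  ⨅ ρ ∈ {ρ : X → ℝ≥0∞ | IsAdmissible Γ ρ}, ∫⁻ x, ρ x ^ α ∂μ

/-- The image of a curve under a mapping. -/
def map {X Y : Type*} (f : X → Y) (γ : Curve X) : Curve Y :=
  ⟨γ.a, γ.b, f ∘ γ.toFun⟩

end Curve

/-- The family `Γ(E, F, A)` of curves joining `E` and `F` within `A`. -/
def curvesJoining {X : Type*} (E F A : Set X) : Set (Curve X) :=
  {γ : Curve X | γ.a ≤ γ.b ∧ γ.toFun γ.a ∈ E ∧ γ.toFun γ.b ∈ F ∧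
    ∀ t ∈ Set.Ioo γ.a γ.b, γ.toFun t ∈ A}

/-- `f` is a ring `Q`-mapping at `x₀ ∈ G`. -/
def IsRingQMapAt {X X' : Type*} [MetricSpace X] [MeasurableSpace X]
    [MetricSpace X'] [MeasurableSpace X']
    (μ : Measure X) (μ' : Measure X') (α α' : ℝ) (G : Set X)
    (f : X → X') (Q : X → ℝ≥0∞) (x₀ : X) : Prop :=
  ∀ r₁ r₂ : ℝ, 0 < r₁ → r₁ < r₂ →
    ∀ η : ℝ → ℝ≥0∞, Measurable η → (1 : ℝ≥0∞) ≤ ∫⁻ r in Set.Ioo r₁ r₂, η r →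
      Curve.modulus μ' α'
          (Curve.map f ''
            curvesJoining (Metric.sphere x₀ r₁) (Metric.sphere x₀ r₂)
              {x | r₁ < dist x x₀ ∧ dist x x₀ < r₂}) ≤
        ∫⁻ x in {x ∈ G | r₁ < dist x x₀ ∧ dist x x₀ < r₂},
          Q x * η (dist x x₀) ^ α ∂μ

/-- Lemma 2.2: modulus estimate for a ring `Q`-mapping from an integral bound. -/
theorem modulus_le_of_ringQMap {X X' : Type*}
    [MetricSpace X] [MeasurableSpace X] [MetricSpace X'] [MeasurableSpace X']
    (μ : Measure X) (μ' : Measure X') (α α' : ℝ) (hα : 2 ≤ α) (hα' : 2 ≤ α')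
    (G : Set X) (hG : IsOpen G ∧ IsConnected G)
    (f : X → X') (Q : X → ℝ≥0∞) (x₀ : X) (hx₀ : x₀ ∈ G)
    (hf : IsRingQMapAt μ μ' α α' G f Q x₀)
    (ε₀ ε₀' : ℝ) (hε₀ : 0 < ε₀) (hball : closure (Metric.ball x₀ ε₀) ⊆ G)
    (hε₀' : ε₀' ∈ Set.Ioo 0 ε₀)
    (ψ : ℝ → ℝ → ℝ≥0∞) (F : ℝ → ℝ≥0∞)
    (hψ : ∀ ε ∈ Set.Ioo (0:ℝ) ε₀', Measurable (ψ ε))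
    (hI : ∀ ε ∈ Set.Ioo (0:ℝ) ε₀',
      0 < ∫⁻ t in Set.Ioo ε ε₀, ψ ε t ∧ (∫⁻ t in Set.Ioo ε ε₀, ψ ε t) < ⊤)
    (hF : ∀ ε ∈ Set.Ioo (0:ℝ) ε₀',
      (∫⁻ x in {x | ε < dist x x₀ ∧ dist x x₀ < ε₀},
        Q x * ψ ε (dist x x₀) ^ α ∂μ) ≤ F ε) :
    ∀ ε ∈ Set.Ioo (0:ℝ) ε₀',
      Curve.modulus μ' α'
          (Curve.map f ''
            curvesJoining (Metric.sphere x₀ ε) (Metric.sphere x₀ ε₀)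
              {x | ε < dist x x₀ ∧ dist x x₀ < ε₀}) ≤
        F ε / (∫⁻ t in Set.Ioo ε ε₀, ψ ε t) ^ α := by
  intro ε hε
  obtain ⟨hIpos, hIfin⟩ := hI ε hε
  set I : ℝ≥0∞ := ∫⁻ t in Set.Ioo ε ε₀, ψ ε t with hIdef
  have hI0 : I ≠ 0 := hIpos.ne'
  have hItop : I ≠ ⊤ := hIfin.ne
  have hε₀ε : ε < ε₀ := lt_trans hε.2 hε₀'.2
  have hηmeas : Measurable (fun r => ψ ε r * I⁻¹) := (hψ ε hε).mul_const _
  have hη1 : (1 : ℝ≥0∞) ≤ ∫⁻ r in Set.Ioo ε ε₀, ψ ε r * I⁻¹ := by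
    rw [lintegral_mul_const' _ _ (by simp [hI0]), ← hIdef, ENNReal.mul_inv_cancel hI0 hItop]
  have key := hf ε ε₀ hε.1 hε₀ε (fun r => ψ ε r * I⁻¹) hηmeas hη1
  have hα0 : (0:ℝ) ≤ α := le_trans (by norm_num) hα
  have hIα : I ^ α ≠ 0 := (ENNReal.rpow_pos hIpos hItop).ne'
  calc Curve.modulus μ' α'
          (Curve.map f ''
            curvesJoining (Metric.sphere x₀ ε) (Metric.sphere x₀ ε₀)
              {x | ε < dist x x₀ ∧ dist x x₀ < ε₀})
      ≤ ∫⁻ x in {x ∈ G | ε < dist x x₀ ∧ dist x x₀ < ε₀},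
          Q x * (ψ ε (dist x x₀) * I⁻¹) ^ α ∂μ := key
    _ ≤ ∫⁻ x in {x | ε < dist x x₀ ∧ dist x x₀ < ε₀},
          Q x * (ψ ε (dist x x₀) * I⁻¹) ^ α ∂μ :=
        lintegral_mono_set (fun x hx => hx.2)
    _ = ∫⁻ x in {x | ε < dist x x₀ ∧ dist x x₀ < ε₀},
          (Q x * ψ ε (dist x x₀) ^ α) * (I ^ α)⁻¹ ∂μ := by
        refine lintegral_congr fun x => ?_
        rw [ENNReal.mul_rpow_of_nonneg _ _ hα0, ENNReal.inv_rpow, mul_assoc]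
    _ = (∫⁻ x in {x | ε < dist x x₀ ∧ dist x x₀ < ε₀},
          Q x * ψ ε (dist x x₀) ^ α ∂μ) * (I ^ α)⁻¹ :=
        lintegral_mul_const' _ _ (by simp [hIα])
    _ ≤ F ε * (I ^ α)⁻¹ := mul_le_mul_left (hF ε hε) _
    _ = F ε / I ^ α := (ENNReal.div_eq_inv_mul.trans (mul_comm _ _)).symm
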